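/- Let $\kappa, \mu, b, \rho_s > 0$ and set $\omega_0 = -\frac{b\rho_s^2}{\mu + \kappa b \rho_s^2}$. For each $n \geq 1$, let $\lambda_n^1 \in (-1/\kappa, 0)$ be a real root of $\mathcal{F}_n(\lambda) = \lambda^3 + \frac{1}{\kappa}\lambda^2 + \left(\frac{\mu}{\kappa\rho_s} + b\rho_s\right)n^2\lambda + \frac{b\rho_s}{\kappa}n^2$. Then $\lambda_n^1 \to \omega_0$ as $n \to \infty$. -/

import Mathlib

/-- Any sequence `λ_n¹ ∈ (-1/κ, 0)` of real roots of `F_n` converges to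
`ω₀ = -bρs²/(μ + κbρs²)` as `n → ∞`. -/
theorem stmt_3 (κ μ b ρs : ℝ) (hκ : 0 < κ) (hμ : 0 < μ) (hb : 0 < b) (hρs : 0 < ρs)
    (lam : ℕ → ℝ)
    (hmem : ∀ n : ℕ, 1 ≤ n → lam n ∈ Set.Ioo (-1/κ) 0)
    (hroot : ∀ n : ℕ, 1 ≤ n →
      (lam n) ^ 3 + (1/κ) * (lam n) ^ 2 + (μ/(κ*ρs) + b*ρs) * (n:ℝ)^2 * lam n
        + (b*ρs/κ) * (n:ℝ)^2 = 0) :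
    Filter.Tendsto lam Filter.atTop (nhds (-(b * ρs^2) / (μ + κ * b * ρs^2))) := by
  set L : ℝ := -(b * ρs^2) / (μ + κ * b * ρs^2) with hL
  have hc : 0 < μ/(κ*ρs) + b*ρs := by positivity
  set c : ℝ := μ/(κ*ρs) + b*ρs with hcdef
  set M : ℝ := (2 / κ^3) / c with hM
  have hMpos : 0 < M := by positivity
  -- key identity
  have key : ∀ n : ℕ, 1 ≤ n →
      lam n - L = (-( (lam n)^3 + (1/κ) * (lam n)^2)) / (c * (n:ℝ)^2) := by
    intro n hn
    have hn2 : (0:ℝ) < (n:ℝ)^2 := by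
      have : (0:ℝ) < (n:ℝ) := by exact_mod_cast hn
      positivity
    have hr := hroot n hn
    have hden : μ + κ * b * ρs^2 > 0 := by positivity
    rw [eq_div_iff (by positivity : c * (n:ℝ)^2 ≠ 0)]
    have hL' : L * c = -(b*ρs/κ) := by
      rw [hL, hcdef]
      have h1 : μ + κ * b * ρs^2 ≠ 0 := by positivity
      field_simp
    nlinarith [hr, hL', mul_self_nonneg (lam n)]
  -- bound
  have hbound : ∀ n : ℕ, 1 ≤ n → |lam n - L| ≤ M / (n:ℝ)^2 := by
    intro n hn
    obtain ⟨h1, h2⟩ := hmem n hn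
    have habs : |lam n| ≤ 1/κ := by
      rw [abs_le]
      constructor
      · have : -1/κ = -(1/κ) := by ring
        linarith [this ▸ h1]
      · have : (0:ℝ) ≤ 1/κ := by positivity
        linarith
    have hn2 : (0:ℝ) < (n:ℝ)^2 := by
      have : (0:ℝ) < (n:ℝ) := by exact_mod_cast hn
      positivity
    rw [key n hn, abs_div, abs_of_pos (by positivity : (0:ℝ) < c * (n:ℝ)^2)]
    have hnum : |(-( (lam n)^3 + (1/κ) * (lam n)^2))| ≤ 2 / κ^3 := by
      have h3 : |(lam n)^3| ≤ (1/κ)^3 := by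
        rw [abs_pow]
        exact pow_le_pow_left₀ (abs_nonneg _) habs 3
      have h2' : |(1/κ) * (lam n)^2| ≤ (1/κ) * (1/κ)^2 := by
        rw [abs_mul, abs_pow, abs_of_pos (by positivity : (0:ℝ) < 1/κ)]
        gcongr
      calc |(-( (lam n)^3 + (1/κ) * (lam n)^2))|
          = |(lam n)^3 + (1/κ) * (lam n)^2| := abs_neg _
        _ ≤ |(lam n)^3| + |(1/κ) * (lam n)^2| := abs_add_le _ _
        _ ≤ (1/κ)^3 + (1/κ) * (1/κ)^2 := by linarith
        _ = 2 / κ^3 := by field_simp; ring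
    rw [hM, div_div]
    rw [div_le_div_iff₀ (by positivity) (by positivity)]
    exact mul_le_mul_of_nonneg_right hnum (by positivity)
  -- limit of M / n^2
  have hlim : Filter.Tendsto (fun n : ℕ => M / (n:ℝ)^2) Filter.atTop (nhds 0) := by
    apply Filter.Tendsto.div_atTop tendsto_const_nhds
    exact Filter.Tendsto.comp (Filter.tendsto_pow_atTop (by norm_num)) tendsto_natCast_atTop_atTop
  have : Filter.Tendsto (fun n => lam n - L) Filter.atTop (nhds 0) := by
    apply squeeze_zero_norm' _ hlim
    filter_upwards [Filter.eventually_ge_atTop 1] with n hn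
    simpa using hbound n hn
  have := this.add_const L
  simpa using this
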